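/- arXiv:2009.05464 — 2 statements merged into one kernel-verified Lean document; each statement's English description precedes it below -/
import Mathlib

section
/- Let F : ℝⁿ → ℝⁿ be a C¹ map with n ≥ 2. Suppose that for every x ∈ ℝⁿ no complex eigenvalue of JF(x) is zero, that every eigenvalue of JF(x)+JF(x)^T is negative for every x, and that there exist M₁, M₂ > 0 such that for every x ∈ ℝⁿ the trace of JF(x)+JF(x)^T is greater than −M₁ and the absolute value of its determinant is greater than M₂. Then F is injective. -/
open Matrix

/-- The Jacobian matrix of a map `F : ℝⁿ → ℝⁿ` at a point `x`:
the matrix of the total (Fréchet) derivative of `F` at `x` in the standard basis. -/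
noncomputable def jacobianMatrix {n : ℕ} (F : (Fin n → ℝ) → (Fin n → ℝ)) (x : Fin n → ℝ) :
    Matrix (Fin n) (Fin n) ℝ :=
  LinearMap.toMatrix' (fderiv ℝ F x).toLinearMap

/-- `μ : ℂ` is a (complex) eigenvalue of the real matrix `A`. -/
def HasComplexEigenvalue {n : ℕ} (A : Matrix (Fin n) (Fin n) ℝ) (μ : ℂ) : Prop :=
  ∃ v : Fin n → ℂ, v ≠ 0 ∧ (A.map Complex.ofReal).mulVec v = μ • v

/-- `μ : ℝ` is a (real) eigenvalue of the real matrix `A`. -/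
def HasRealEigenvalue {n : ℕ} (A : Matrix (Fin n) (Fin n) ℝ) (μ : ℝ) : Prop :=
  ∃ v : Fin n → ℝ, v ≠ 0 ∧ A.mulVec v = μ • v

lemma quadform_neg {n : ℕ} (S : Matrix (Fin n) (Fin n) ℝ) (hsym : Sᵀ = S)
    (h : ∀ μ : ℝ, HasRealEigenvalue S μ → μ < 0) (v : Fin n → ℝ) (hv : v ≠ 0) :
    v ⬝ᵥ S *ᵥ v < 0 := by
  have hS : S.IsHermitian := by
    rw [Matrix.IsHermitian, conjTranspose_eq_transpose_of_trivial, hsym]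
  have hlam : ∀ i, hS.eigenvalues i < 0 := by
    intro i
    refine h _ ⟨hS.eigenvectorBasis i, ?_, hS.mulVec_eigenvectorBasis i⟩
    intro h0
    have := hS.eigenvectorBasis.toBasis.ne_zero i
    apply this
    ext j
    exact congrFun h0 j
  set U : Matrix (Fin n) (Fin n) ℝ := (hS.eigenvectorUnitary : Matrix (Fin n) (Fin n) ℝ)
  set w : Fin n → ℝ := star U *ᵥ v with hw
  have hUw : U *ᵥ w = v := by
    rw [hw, mulVec_mulVec, Matrix.mem_unitaryGroup_iff.mp hS.eigenvectorUnitary.2, one_mulVec]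
  have hwne : w ≠ 0 := by
    intro h0
    apply hv
    rw [← hUw, h0, mulVec_zero]
  have key : v ⬝ᵥ S *ᵥ v = ∑ i, hS.eigenvalues i * (w i)^2 := by
    conv_lhs => rw [hS.spectral_theorem, Unitary.conjStarAlgAut_apply]
    rw [Matrix.mul_assoc, ← mulVec_mulVec, ← mulVec_mulVec, dotProduct_mulVec,
      ← hw]
    have h1 : v ᵥ* (hS.eigenvectorUnitary : Matrix (Fin n) (Fin n) ℝ) = w := by
      rw [hw, Matrix.star_eq_conjTranspose, conjTranspose_eq_transpose_of_trivial,
        mulVec_transpose]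
    rw [h1]
    simp only [mulVec_diagonal, dotProduct]
    congr 1
    ext i
    simp [Function.comp]
    ring
  rw [key]
  obtain ⟨i, hi⟩ := Function.ne_iff.mp hwne
  have : ∑ i, hS.eigenvalues i * (w i)^2 < ∑ _i : Fin n, (0:ℝ) := by
    refine Finset.sum_lt_sum (fun j _ => ?_) ⟨i, Finset.mem_univ i, ?_⟩
    · exact mul_nonpos_of_nonpos_of_nonneg (hlam j).le (sq_nonneg _)
    · exact mul_neg_of_neg_of_pos (hlam i) (sq_pos_of_ne_zero hi)
  simpa using this

lemma jac_mulVec {n : ℕ} (F : (Fin n → ℝ) → (Fin n → ℝ)) (x u : Fin n → ℝ) :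
    (jacobianMatrix F x) *ᵥ u = fderiv ℝ F x u := by
  rw [jacobianMatrix, ← Matrix.toLin'_apply, Matrix.toLin'_toMatrix']
  rfl

/-- Let `F : ℝⁿ → ℝⁿ` (n ≥ 2) be `C¹` with no complex eigenvalue of `JF(x)`
equal to zero for any `x`. Suppose every eigenvalue of `JF(x)+JF(x)ᵀ` is negative for every
`x`, and there are `M₁, M₂ > 0` such that for every `x` the trace of `JF(x)+JF(x)ᵀ` is
greater than `-M₁` and the absolute value of its determinant is greater than `M₂`.
Then `F` is injective. -/
theorem injective_of_negative_symmetric_spec_trace_det_bounds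
    {n : ℕ} (hn : 2 ≤ n) (F : (Fin n → ℝ) → (Fin n → ℝ)) (hF : ContDiff ℝ 1 F)
    (hspec : ∀ x : Fin n → ℝ, ∀ μ : ℂ, HasComplexEigenvalue (jacobianMatrix F x) μ → μ ≠ 0)
    (hneg : ∀ x : Fin n → ℝ, ∀ μ : ℝ,
        HasRealEigenvalue (jacobianMatrix F x + (jacobianMatrix F x)ᵀ) μ → μ < 0)
    (hbound : ∃ M₁ > (0 : ℝ), ∃ M₂ > (0 : ℝ), ∀ x : Fin n → ℝ,
        -M₁ < (jacobianMatrix F x + (jacobianMatrix F x)ᵀ).trace ∧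
        M₂ < |(jacobianMatrix F x + (jacobianMatrix F x)ᵀ).det|) :
    Function.Injective F := by
  intro a b hab
  by_contra hne
  set v : Fin n → ℝ := a - b with hv
  have hvne : v ≠ 0 := sub_ne_zero.mpr hne
  have hdF : Differentiable ℝ F := hF.differentiable one_ne_zero
  set γ : ℝ → (Fin n → ℝ) := fun t => b + t • v with hγdef
  have hγ : ∀ t : ℝ, HasDerivAt γ v t := by
    intro t
    have h1 : HasDerivAt (fun t : ℝ => t • v) ((1:ℝ) • v) t :=
      (hasDerivAt_id t).smul_const v
    have h2 := h1.const_add b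
    rw [one_smul] at h2
    exact h2
  have hFd : ∀ t : ℝ, HasDerivAt (fun s => F (γ s)) (fderiv ℝ F (γ t) v) t := by
    intro t
    exact (hdF (γ t)).hasFDerivAt.comp_hasDerivAt t (hγ t)
  set g : ℝ → ℝ := fun t => F (γ t) ⬝ᵥ v with hgdef
  have hg : ∀ t : ℝ, HasDerivAt g ((fderiv ℝ F (γ t) v) ⬝ᵥ v) t := by
    intro t
    have : HasDerivAt (fun s => ∑ i, F (γ s) i * v i) (∑ i, (fderiv ℝ F (γ t) v) i * v i) t := by
      apply HasDerivAt.fun_sum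
      intro i _
      exact (((ContinuousLinearMap.proj (R := ℝ) (φ := fun _ : Fin n => ℝ)
        i).hasFDerivAt.comp_hasDerivAt t (hFd t))).mul_const (v i)
    exact this
  have hquad : ∀ t : ℝ, (fderiv ℝ F (γ t) v) ⬝ᵥ v < 0 := by
    intro t
    set J := jacobianMatrix F (γ t) with hJ
    have hsym : (J + Jᵀ)ᵀ = J + Jᵀ := by
      rw [transpose_add, transpose_transpose, add_comm]
    have hq := quadform_neg (J + Jᵀ) hsym (hneg (γ t)) v hvne
    have hexp : v ⬝ᵥ (J + Jᵀ) *ᵥ v = 2 * ((J *ᵥ v) ⬝ᵥ v) := by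
      rw [add_mulVec, dotProduct_add, dotProduct_mulVec v Jᵀ v, vecMul_transpose,
        dotProduct_comm v (J *ᵥ v)]
      ring
    rw [hexp] at hq
    have h2 : (J *ᵥ v) ⬝ᵥ v < 0 := by linarith
    rwa [hJ, jac_mulVec] at h2
  have hanti : StrictAnti g := by
    apply strictAnti_of_deriv_neg
    intro t
    rw [(hg t).deriv]
    exact hquad t
  have h01 : g 1 < g 0 := hanti (by norm_num)
  have hγ0 : γ 0 = b := by simp [hγdef]
  have hγ1 : γ 1 = a := by simp [hγdef, hv]
  rw [hgdef] at h01
  simp only [hγ0, hγ1, hab] at h01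
  exact lt_irrefl _ h01
end

section
/- Let n ≥ 2 and let F : ℝⁿ → ℝⁿ be a C¹ map. Suppose there exists ε > 0 such that: (1) every complex eigenvalue λ of JF(x), for every x ∈ ℝⁿ, satisfies |Re λ| ≥ ε or |Im λ| ≥ ε (i.e., Spec(F) ⊆ ℂ \ ((−ε, ε) × (−iε, iε))); and (2) either every eigenvalue of JF(x)+JF(x)^T is greater than ε for every x, or every eigenvalue of JF(x)+JF(x)^T is less than −ε for every x. Then F is injective. -/
open Matrix

/-- A real symmetric matrix all of whose eigenvalues are positive has a positive
quadratic form on nonzero vectors. -/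
lemma quadPos_aux {n : ℕ} {A : Matrix (Fin n) (Fin n) ℝ} (hA : A.IsHermitian)
    (h : ∀ i, 0 < hA.eigenvalues i) {v : Fin n → ℝ} (hv : v ≠ 0) :
    0 < v ⬝ᵥ A.mulVec v := by
  classical
  set U : Matrix (Fin n) (Fin n) ℝ := (hA.eigenvectorUnitary : Matrix (Fin n) (Fin n) ℝ) with hU
  have hU1 : U * star U = 1 := (Matrix.mem_unitaryGroup_iff).mp hA.eigenvectorUnitary.2
  set w : Fin n → ℝ := (star U) *ᵥ v with hw
  have hwne : w ≠ 0 := by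
    intro h0
    apply hv
    have : U *ᵥ ((star U) *ᵥ v) = v := by
      rw [mulVec_mulVec, hU1, one_mulVec]
    rw [← hw, h0, mulVec_zero] at this
    exact this.symm
  have hvU : v ᵥ* U = w := by
    rw [hw, ← mulVec_transpose, Matrix.star_eq_conjTranspose,
      conjTranspose_eq_transpose_of_trivial]
  have key : v ⬝ᵥ A.mulVec v = ∑ i, hA.eigenvalues i * (w i * w i) := by
    conv_lhs => rw [hA.spectral_theorem]; simp only [Unitary.conjStarAlgAut_apply, Unitary.coe_star]
    rw [← mulVec_mulVec, ← mulVec_mulVec, dotProduct_mulVec, hvU, ← hw]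
    simp only [dotProduct, mulVec_diagonal, Function.comp, RCLike.ofReal_real_eq_id, id]
    exact Finset.sum_congr rfl fun i _ => by ring
  rw [key]
  obtain ⟨j, hj⟩ := Function.ne_iff.mp hwne
  exact Finset.sum_pos' (fun i _ => mul_nonneg (h i).le (mul_self_nonneg _))
    ⟨j, Finset.mem_univ j, mul_pos (h j) (mul_self_pos.mpr hj)⟩

/-- If the derivative of `F` is everywhere "positive" in the direction `a - b`
(in the sense that `(DF(x)(a-b)) ⬝ᵥ (a-b) > 0`), then `F a ≠ F b`. -/
lemma mono_aux {n : ℕ} {F : (Fin n → ℝ) → (Fin n → ℝ)} (hF : Differentiable ℝ F)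
    {a b : Fin n → ℝ}
    (h : ∀ x : Fin n → ℝ, 0 < (fderiv ℝ F x (a - b)) ⬝ᵥ (a - b)) : F a ≠ F b := by
  set v : Fin n → ℝ := a - b with hv
  set γ : ℝ → (Fin n → ℝ) := fun t => b + t • v with hγ
  set φ : ℝ → ℝ := fun t => (F (γ t)) ⬝ᵥ v with hφ
  have hd : ∀ t : ℝ, HasDerivAt φ ((fderiv ℝ F (γ t) v) ⬝ᵥ v) t := by
    intro t
    have hγd : HasDerivAt γ v t := by
      exact (((hasDerivAt_id t).smul_const v).const_add b).congr_deriv (one_smul ℝ v)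
    have hFγ : HasDerivAt (fun t => F (γ t)) (fderiv ℝ F (γ t) v) t :=
      ((hF (γ t)).hasFDerivAt).comp_hasDerivAt t hγd
    have := hasDerivAt_pi.mp hFγ
    have : ∀ i, HasDerivAt (fun t => F (γ t) i * v i) ((fderiv ℝ F (γ t) v) i * v i) t :=
      fun i => (this i).mul_const (v i)
    simpa [hφ, dotProduct] using HasDerivAt.fun_sum (fun i _ => this i)
  have hmono : StrictMonoOn φ (Set.Icc 0 1) := by
    refine strictMonoOn_of_deriv_pos (convex_Icc 0 1) ?_ ?_
    · exact fun t _ => (hd t).continuousAt.continuousWithinAt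
    · intro t ht
      rw [(hd t).deriv]
      exact h (γ t)
  intro hFab
  have h01 : φ 0 < φ 1 := hmono (Set.left_mem_Icc.mpr zero_le_one)
    (Set.right_mem_Icc.mpr zero_le_one) zero_lt_one
  have e0 : φ 0 = (F b) ⬝ᵥ v := by simp [hφ, hγ]
  have e1 : φ 1 = (F a) ⬝ᵥ v := by simp [hφ, hγ, hv]
  rw [e0, e1, hFab] at h01
  exact lt_irrefl _ h01

lemma mulVec_jacobianMatrix {n : ℕ} (F : (Fin n → ℝ) → (Fin n → ℝ)) (x v : Fin n → ℝ) :
    (jacobianMatrix F x).mulVec v = fderiv ℝ F x v := by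
  rw [jacobianMatrix, ← Matrix.toLin'_apply, Matrix.toLin'_toMatrix']
  rfl

lemma herm_add_transpose {n : ℕ} (J : Matrix (Fin n) (Fin n) ℝ) : (J + Jᵀ).IsHermitian := by
  rw [Matrix.IsHermitian, conjTranspose_eq_transpose_of_trivial, transpose_add,
    transpose_transpose, add_comm]

lemma dot_add_transpose {n : ℕ} (J : Matrix (Fin n) (Fin n) ℝ) (v : Fin n → ℝ) :
    v ⬝ᵥ (J + Jᵀ).mulVec v = 2 * ((J.mulVec v) ⬝ᵥ v) := by
  rw [add_mulVec, dotProduct_add]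
  have h1 : v ⬝ᵥ J.mulVec v = (J.mulVec v) ⬝ᵥ v := dotProduct_comm _ _
  have h2 : v ⬝ᵥ Jᵀ.mulVec v = (J.mulVec v) ⬝ᵥ v := by
    rw [dotProduct_mulVec, vecMul_transpose]
  rw [h1, h2]; ring

/-- Let `F : ℝⁿ → ℝⁿ` (n ≥ 2) be `C¹`. Suppose there is `ε > 0` such that
(1) every complex eigenvalue `μ` of `JF(x)` satisfies `|Re μ| ≥ ε` or `|Im μ| ≥ ε`, for
every `x`; and (2) either every eigenvalue of `JF(x)+JF(x)ᵀ` is greater than `ε` for every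
`x`, or every eigenvalue of `JF(x)+JF(x)ᵀ` is less than `-ε` for every `x`. Then `F` is
injective. -/
theorem injective_of_spec_off_square_and_symmetric_spec_bounded_away
    {n : ℕ} (hn : 2 ≤ n) (F : (Fin n → ℝ) → (Fin n → ℝ)) (hF : ContDiff ℝ 1 F)
    (hspec : ∃ ε > (0 : ℝ),
      (∀ x : Fin n → ℝ, ∀ μ : ℂ, HasComplexEigenvalue (jacobianMatrix F x) μ →
        ε ≤ |μ.re| ∨ ε ≤ |μ.im|) ∧
      ((∀ x : Fin n → ℝ, ∀ μ : ℝ,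
          HasRealEigenvalue (jacobianMatrix F x + (jacobianMatrix F x)ᵀ) μ → ε < μ) ∨
       (∀ x : Fin n → ℝ, ∀ μ : ℝ,
          HasRealEigenvalue (jacobianMatrix F x + (jacobianMatrix F x)ᵀ) μ → μ < -ε))) :
    Function.Injective F := by
  obtain ⟨ε, hε, -, hsym⟩ := hspec
  have hdiff : Differentiable ℝ F := hF.differentiable one_ne_zero
  intro a b hFab
  by_contra hab
  have hv : a - b ≠ 0 := sub_ne_zero.mpr hab
  rcases hsym with hpos | hneg
  · -- positive definite case
    refine mono_aux hdiff (fun x => ?_) hFab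
    set J := jacobianMatrix F x with hJ
    set A := J + Jᵀ with hA'
    have hA : A.IsHermitian := herm_add_transpose J
    have heig : ∀ i, 0 < hA.eigenvalues i := by
      intro i
      have : HasRealEigenvalue A (hA.eigenvalues i) :=
        ⟨_, by simpa using hA.eigenvectorBasis.orthonormal.ne_zero i, hA.mulVec_eigenvectorBasis i⟩
      exact hε.trans (hpos x _ this)
    have hq : 0 < (a - b) ⬝ᵥ A.mulVec (a - b) := quadPos_aux hA heig hv
    rw [hA', dot_add_transpose] at hq
    have : 0 < (J.mulVec (a - b)) ⬝ᵥ (a - b) := by linarith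
    rwa [hJ, mulVec_jacobianMatrix] at this
  · -- negative definite case: apply to -F
    have h' : (fun y => -F y) a ≠ (fun y => -F y) b := by
      refine mono_aux hdiff.neg (fun x => ?_)
      set J := jacobianMatrix F x with hJ
      set A := J + Jᵀ with hA'
      have hA : A.IsHermitian := herm_add_transpose J
      have hB : (-A).IsHermitian := hA.neg
      have heig : ∀ i, 0 < hB.eigenvalues i := by
        intro i
        obtain ⟨u, hu, huA⟩ :
            ∃ u : Fin n → ℝ, u ≠ 0 ∧ (-A).mulVec u = hB.eigenvalues i • u :=
          ⟨_, by simpa using hB.eigenvectorBasis.orthonormal.ne_zero i, hB.mulVec_eigenvectorBasis i⟩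
        have : HasRealEigenvalue A (-(hB.eigenvalues i)) := by
          refine ⟨u, hu, ?_⟩
          rw [neg_mulVec] at huA
          rw [neg_smul, ← huA, neg_neg]
        have := hneg x _ this
        linarith
      have hq : 0 < (a - b) ⬝ᵥ (-A).mulVec (a - b) := quadPos_aux hB heig hv
      rw [neg_mulVec, dotProduct_neg, hA', dot_add_transpose] at hq
      have hfd : fderiv ℝ (fun y => -F y) x = -(fderiv ℝ F x) := fderiv_neg
      rw [show fderiv ℝ (-F) x = -(fderiv ℝ F x) from hfd]
      have hJv : J.mulVec (a - b) = fderiv ℝ F x (a - b) := mulVec_jacobianMatrix F x _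
      have : (fderiv ℝ F x (a - b)) ⬝ᵥ (a - b) < 0 := by rw [← hJv]; linarith
      simp only [ContinuousLinearMap.neg_apply, neg_dotProduct]
      linarith
    exact h' (by simp [hFab])
end
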